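/- Let (A, ·, ε) be a commutative associative color algebra (x·y = ε(x,y) y·x for homogeneous x, y) and let (L, [-,-,-], ε) be a ternary Leibniz color algebra. Then the tensor product A⊗L equipped with the trilinear bracket {a⊗x, b⊗y, c⊗z} := ε(x, b+c) ε(y, c) (a·b·c)⊗[x,y,z] (for homogeneous a, b, c ∈ A and x, y, z ∈ L) is a ternary Leibniz color algebra. -/

import Mathlib

open scoped TensorProduct

/-- If `(A,·,ε)` is a commutative associative color algebra and
`(L,[-,-,-],ε)` a ternary Leibniz color algebra, then `A ⊗ L` with
`{a⊗x, b⊗y, c⊗z} := ε(x,b+c) ε(y,c) (a·b·c) ⊗ [x,y,z]` is a ternary Leibniz color algebra. -/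
theorem comm_assoc_tensor_ternary_leibniz_color
    {G K A L : Type*} [AddCommGroup G] [DecidableEq G] [Field K]
    [AddCommGroup A] [Module K A] [AddCommGroup L] [Module K L]
    (hchar : ringChar K ≠ 2)
    (𝒜 : G → Submodule K A) [DirectSum.Decomposition 𝒜]
    (ℬ : G → Submodule K L) [DirectSum.Decomposition ℬ]
    (ε : G → G → Kˣ)
    (hε_skew : ∀ a b, ε a b * ε b a = 1)
    (hε_addr : ∀ a b c, ε a (b + c) = ε a b * ε a c)
    (hε_addl : ∀ a b c, ε (a + b) c = ε a c * ε b c)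
    (mul : A →ₗ[K] A →ₗ[K] A)
    (hmul_even : ∀ a b, ∀ x ∈ 𝒜 a, ∀ y ∈ 𝒜 b, mul x y ∈ 𝒜 (a + b))
    (hassoc : ∀ a b c, ∀ x ∈ 𝒜 a, ∀ y ∈ 𝒜 b, ∀ z ∈ 𝒜 c,
      mul (mul x y) z = mul x (mul y z))
    (hcomm : ∀ a b, ∀ x ∈ 𝒜 a, ∀ y ∈ 𝒜 b, mul x y = (ε a b : K) • mul y x)
    (tb : L →ₗ[K] L →ₗ[K] L →ₗ[K] L)
    (htb_even : ∀ p q r, ∀ x ∈ ℬ p, ∀ y ∈ ℬ q, ∀ z ∈ ℬ r, tb x y z ∈ ℬ (p + q + r))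
    (htleib : ∀ p q r s w, ∀ x ∈ ℬ p, ∀ y ∈ ℬ q, ∀ z ∈ ℬ r, ∀ t ∈ ℬ s, ∀ u ∈ ℬ w,
      tb (tb x y z) t u = tb x y (tb z t u)
        + (ε r (s + w) : K) • tb x (tb y t u) z
        + (ε (q + r) (s + w) : K) • tb (tb x t u) y z)
    (B : (A ⊗[K] L) →ₗ[K] (A ⊗[K] L) →ₗ[K] (A ⊗[K] L) →ₗ[K] (A ⊗[K] L))
    (hB : ∀ α β γ p q r, ∀ a ∈ 𝒜 α, ∀ b ∈ 𝒜 β, ∀ c ∈ 𝒜 γ,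
      ∀ x ∈ ℬ p, ∀ y ∈ ℬ q, ∀ z ∈ ℬ r,
      B (a ⊗ₜ[K] x) (b ⊗ₜ[K] y) (c ⊗ₜ[K] z)
        = ((ε p (β + γ) : K) * (ε q γ : K)) • ((mul (mul a b) c) ⊗ₜ[K] tb x y z)) :
    ∀ α₁ α₂ α₃ α₄ α₅ p₁ p₂ p₃ p₄ p₅,
      ∀ a₁ ∈ 𝒜 α₁, ∀ a₂ ∈ 𝒜 α₂, ∀ a₃ ∈ 𝒜 α₃, ∀ a₄ ∈ 𝒜 α₄, ∀ a₅ ∈ 𝒜 α₅,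
      ∀ x₁ ∈ ℬ p₁, ∀ x₂ ∈ ℬ p₂, ∀ x₃ ∈ ℬ p₃, ∀ x₄ ∈ ℬ p₄, ∀ x₅ ∈ ℬ p₅,
      B (B (a₁ ⊗ₜ[K] x₁) (a₂ ⊗ₜ[K] x₂) (a₃ ⊗ₜ[K] x₃)) (a₄ ⊗ₜ[K] x₄) (a₅ ⊗ₜ[K] x₅)
        = B (a₁ ⊗ₜ[K] x₁) (a₂ ⊗ₜ[K] x₂) (B (a₃ ⊗ₜ[K] x₃) (a₄ ⊗ₜ[K] x₄) (a₅ ⊗ₜ[K] x₅))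
          + (ε (α₃ + p₃) (α₄ + p₄ + (α₅ + p₅)) : K) •
              B (a₁ ⊗ₜ[K] x₁) (B (a₂ ⊗ₜ[K] x₂) (a₄ ⊗ₜ[K] x₄) (a₅ ⊗ₜ[K] x₅)) (a₃ ⊗ₜ[K] x₃)
          + (ε (α₂ + p₂ + (α₃ + p₃)) (α₄ + p₄ + (α₅ + p₅)) : K) •
              B (B (a₁ ⊗ₜ[K] x₁) (a₄ ⊗ₜ[K] x₄) (a₅ ⊗ₜ[K] x₅)) (a₂ ⊗ₜ[K] x₂) (a₃ ⊗ₜ[K] x₃) := by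
  intro α₁ α₂ α₃ α₄ α₅ p₁ p₂ p₃ p₄ p₅ a₁ ha₁ a₂ ha₂ a₃ ha₃ a₄ ha₄ a₅ ha₅
    x₁ hx₁ x₂ hx₂ x₃ hx₃ x₄ hx₄ x₅ hx₅
  -- scalar-level facts about ε
  have Er : ∀ a b c : G, ((ε a (b + c) : Kˣ) : K) = (ε a b : K) * (ε a c : K) := fun a b c => by
    exact_mod_cast congrArg Units.val (hε_addr a b c)
  have El : ∀ a b c : G, ((ε (a + b) c : Kˣ) : K) = (ε a c : K) * (ε b c : K) := fun a b c => by
    exact_mod_cast congrArg Units.val (hε_addl a b c)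
  have Einv : ∀ a b : G, ((ε b a : Kˣ) : K) = ((ε a b : K))⁻¹ := fun a b => by
    have h : (ε b a : Kˣ) = (ε a b)⁻¹ :=
      eq_inv_of_mul_eq_one_left (by rw [mul_comm]; exact hε_skew a b)
    rw [h]; exact Units.val_inv_eq_inv_val _
  have Ene : ∀ a b : G, ((ε a b : Kˣ) : K) ≠ 0 := fun a b => Units.ne_zero _
  -- homogeneity facts
  have hb12 := hmul_even _ _ _ ha₁ _ ha₂
  have hb123 := hmul_even _ _ _ hb12 _ ha₃
  have hb34 := hmul_even _ _ _ ha₃ _ ha₄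
  have hb345 := hmul_even _ _ _ hb34 _ ha₅
  have hb24 := hmul_even _ _ _ ha₂ _ ha₄
  have hb245 := hmul_even _ _ _ hb24 _ ha₅
  have hb14 := hmul_even _ _ _ ha₁ _ ha₄
  have hb145 := hmul_even _ _ _ hb14 _ ha₅
  have hb45 := hmul_even _ _ _ ha₄ _ ha₅
  have ht123 := htb_even _ _ _ _ hx₁ _ hx₂ _ hx₃
  have ht345 := htb_even _ _ _ _ hx₃ _ hx₄ _ hx₅
  have ht245 := htb_even _ _ _ _ hx₂ _ hx₄ _ hx₅
  have ht145 := htb_even _ _ _ _ hx₁ _ hx₄ _ hx₅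
  -- canonical product of the a's
  set M : A := mul (mul (mul (mul a₁ a₂) a₃) a₄) a₅ with hM
  -- rearrangement lemmas in A
  have hMalt : M = mul (mul a₁ a₂) (mul a₃ (mul a₄ a₅)) := by
    rw [hM, hassoc _ _ _ _ hb123 _ ha₄ _ ha₅, hassoc _ _ _ _ hb12 _ ha₃ _ hb45]
  have hQ1 : mul (mul a₁ a₂) (mul (mul a₃ a₄) a₅) = M := by
    rw [hassoc _ _ _ _ ha₃ _ ha₄ _ ha₅, hMalt]
  have hQ2 : mul (mul a₁ (mul (mul a₂ a₄) a₅)) a₃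
      = ((ε α₄ α₃ : K) * (ε α₅ α₃ : K)) • M := by
    rw [hassoc _ _ _ _ ha₂ _ ha₄ _ ha₅]
    rw [hassoc _ _ _ _ ha₁ _ (hmul_even _ _ _ ha₂ _ hb45) _ ha₃]
    rw [hassoc _ _ _ _ ha₂ _ hb45 _ ha₃]
    rw [hcomm _ _ _ hb45 _ ha₃]
    rw [El]
    simp only [map_smul, LinearMap.smul_apply]
    rw [hMalt, hassoc _ _ _ _ ha₁ _ ha₂ _ (hmul_even _ _ _ ha₃ _ hb45)]
  have hQ3 : mul (mul (mul (mul a₁ a₄) a₅) a₂) a₃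
      = ((ε α₄ α₂ : K) * (ε α₅ α₂ : K) * ((ε α₄ α₃ : K) * (ε α₅ α₃ : K))) • M := by
    rw [hassoc _ _ _ _ ha₁ _ ha₄ _ ha₅]
    rw [hassoc _ _ _ _ ha₁ _ hb45 _ ha₂]
    rw [hcomm _ _ _ hb45 _ ha₂]
    rw [El]
    simp only [map_smul, LinearMap.smul_apply]
    rw [← hassoc _ _ _ _ ha₁ _ ha₂ _ hb45]
    rw [hassoc _ _ _ _ hb12 _ hb45 _ ha₃]
    rw [hcomm _ _ _ hb45 _ ha₃]
    rw [El, map_smul]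
    rw [hMalt, hassoc _ _ _ _ ha₁ _ ha₂ _ (hmul_even _ _ _ ha₃ _ hb45)]
    rw [smul_smul]
  -- expand the inner brackets
  rw [hB _ _ _ _ _ _ _ ha₁ _ ha₂ _ ha₃ _ hx₁ _ hx₂ _ hx₃,
      hB _ _ _ _ _ _ _ ha₃ _ ha₄ _ ha₅ _ hx₃ _ hx₄ _ hx₅,
      hB _ _ _ _ _ _ _ ha₂ _ ha₄ _ ha₅ _ hx₂ _ hx₄ _ hx₅,
      hB _ _ _ _ _ _ _ ha₁ _ ha₄ _ ha₅ _ hx₁ _ hx₄ _ hx₅]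
  simp only [map_smul, LinearMap.smul_apply]
  -- expand the outer brackets
  rw [hB _ _ _ _ _ _ _ hb123 _ ha₄ _ ha₅ _ ht123 _ hx₄ _ hx₅,
      hB _ _ _ _ _ _ _ ha₁ _ ha₂ _ hb345 _ hx₁ _ hx₂ _ ht345,
      hB _ _ _ _ _ _ _ ha₁ _ hb245 _ ha₃ _ hx₁ _ ht245 _ hx₃,
      hB _ _ _ _ _ _ _ hb145 _ ha₂ _ ha₃ _ ht145 _ hx₂ _ hx₃]
  -- use the ternary Leibniz identity in L
  rw [htleib _ _ _ _ _ _ hx₁ _ hx₂ _ hx₃ _ hx₄ _ hx₅]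
  -- rearrange A-products to the canonical M
  rw [hQ1, hQ2, hQ3]
  simp only [TensorProduct.tmul_add, TensorProduct.tmul_smul, ← TensorProduct.smul_tmul',
    smul_add, smul_smul]
  rw [← hM]
  match_scalars
  · simp only [Er, El]; ring
  · simp only [Er, El, Einv α₃ α₄, Einv α₃ α₅, Einv α₃ p₄, Einv α₃ p₅]
    field_simp
  · simp only [Er, El, Einv α₂ α₄, Einv α₂ α₅, Einv α₂ p₄, Einv α₂ p₅,
      Einv α₃ α₄, Einv α₃ α₅, Einv α₃ p₄, Einv α₃ p₅]
    field_simp
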